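/- Let r ∈ ℚ. For every n ∈ ℕ, the sum S(n) = C(2n, n) · Σ_{k=0}^{2n} ((−r)_k / k!) · C(3n−k, 2n−k) satisfies the closed form S(n) · (1−r)_n · (n!)² = 27^n · ((1−r)/3)_n · ((2−r)/3)_n · ((3−r)/3)_n. -/

import Mathlib

open Finset

private noncomputable def pochQ (x : ℚ) (k : ℕ) : ℚ :=
  (ascPochhammer ℚ k).eval x / (Nat.factorial k : ℚ)

private lemma pochQ_zero (x : ℚ) : pochQ x 0 = 1 := by
  simp [pochQ]

private lemma pochQ_succ (x : ℚ) (k : ℕ) :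
    pochQ x (k + 1) * (k + 1) = pochQ x k * (x + k) := by
  unfold pochQ
  rw [ascPochhammer_succ_eval, Nat.factorial_succ]
  have hk : ((Nat.factorial k : ℚ)) ≠ 0 := by exact_mod_cast k.factorial_ne_zero
  have hk1 : ((k : ℚ) + 1) ≠ 0 := by positivity
  field_simp
  push_cast
  ring

private lemma vandermondeQ : ∀ (m : ℕ) (x y : ℚ),
    ∑ k ∈ range (m + 1), pochQ x k * pochQ y (m - k) = pochQ (x + y) m := by
  intro m
  induction m with
  | zero => intro x y; simp [pochQ]
  | succ m ih =>
    intro x y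
    have hm1 : ((m : ℚ) + 1) ≠ 0 := by positivity
    have key : (∑ k ∈ range (m + 2), pochQ x k * pochQ y (m + 1 - k)) * ((m : ℚ) + 1) =
        pochQ (x + y) m * (x + y + m) := by
      have split : ∀ k ∈ range (m + 2),
          pochQ x k * pochQ y (m + 1 - k) * ((m : ℚ) + 1) =
            (k : ℚ) * (pochQ x k * pochQ y (m + 1 - k)) +
              ((m + 1 - k : ℕ) : ℚ) * (pochQ x k * pochQ y (m + 1 - k)) := by
        intro k hk
        simp only [mem_range] at hk
        have : ((m + 1 - k : ℕ) : ℚ) = (m : ℚ) + 1 - k := by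
          have : k ≤ m + 1 := by omega
          push_cast [this]; ring
        rw [this]; ring
      rw [Finset.sum_mul, Finset.sum_congr rfl split, Finset.sum_add_distrib]
      have h1 : ∑ k ∈ range (m + 2), (k : ℚ) * (pochQ x k * pochQ y (m + 1 - k)) =
          ∑ k ∈ range (m + 1), pochQ x k * (x + k) * pochQ y (m - k) := by
        rw [Finset.sum_range_succ']
        simp only [Nat.cast_zero, zero_mul, add_zero]
        refine Finset.sum_congr rfl fun k hk => ?_
        have hsub : m + 1 - (k + 1) = m - k := by omega
        rw [hsub]
        have := pochQ_succ x k
        push_cast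
        calc ((k : ℚ) + 1) * (pochQ x (k + 1) * pochQ y (m - k))
            = (pochQ x (k + 1) * ((k : ℚ) + 1)) * pochQ y (m - k) := by ring
          _ = pochQ x k * (x + k) * pochQ y (m - k) := by rw [this]
      have h2 : ∑ k ∈ range (m + 2), ((m + 1 - k : ℕ) : ℚ) * (pochQ x k * pochQ y (m + 1 - k)) =
          ∑ k ∈ range (m + 1), pochQ x k * pochQ y (m - k) * (y + (m - k : ℕ)) := by
        rw [Finset.sum_range_succ]
        have : ((m + 1 - (m + 1) : ℕ) : ℚ) = 0 := by simp
        rw [this, zero_mul, add_zero]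
        refine Finset.sum_congr rfl fun k hk => ?_
        simp only [mem_range] at hk
        have hsub : m + 1 - k = (m - k) + 1 := by omega
        rw [hsub]
        have hj := pochQ_succ y (m - k)
        push_cast
        calc (((m - k : ℕ) : ℚ) + 1) * (pochQ x k * pochQ y (m - k + 1))
            = pochQ x k * (pochQ y (m - k + 1) * (((m - k : ℕ) : ℚ) + 1)) := by ring
          _ = pochQ x k * (pochQ y (m - k) * (y + (m - k : ℕ))) := by rw [hj]
          _ = pochQ x k * pochQ y (m - k) * (y + (m - k : ℕ)) := by ring
      rw [h1, h2]
      have h3 : ∀ k ∈ range (m + 1),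
          pochQ x k * (x + k) * pochQ y (m - k) + pochQ x k * pochQ y (m - k) * (y + (m - k : ℕ)) =
            pochQ x k * pochQ y (m - k) * (x + y + m) := by
        intro k hk
        simp only [mem_range] at hk
        have : ((m - k : ℕ) : ℚ) = (m : ℚ) - k := by
          have : k ≤ m := by omega
          push_cast [this]; ring
        rw [this]; ring
      rw [← Finset.sum_add_distrib, Finset.sum_congr rfl h3, ← Finset.sum_mul, ih]
    have goal_mul : (∑ k ∈ range (m + 2), pochQ x k * pochQ y (m + 1 - k)) * ((m : ℚ) + 1) =
        pochQ (x + y) (m + 1) * ((m : ℚ) + 1) := by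
      rw [key]
      have := pochQ_succ (x + y) m
      push_cast at this ⊢
      linarith [this]
    exact mul_right_cancel₀ hm1 goal_mul

private lemma pochQ_nat_choose (p j : ℕ) : pochQ ((p : ℚ) + 1) j = ((p + j).choose j : ℚ) := by
  unfold pochQ
  have h1 : ((p : ℚ) + 1) = ((p + 1 : ℕ) : ℚ) := by push_cast; ring
  rw [h1, ← ascPochhammer_eval_cast, ascPochhammer_nat_eq_ascFactorial,
    Nat.ascFactorial_eq_factorial_mul_choose]
  have : ((Nat.factorial j : ℚ)) ≠ 0 := by exact_mod_cast j.factorial_ne_zero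
  push_cast
  field_simp

private lemma triplication : ∀ (n : ℕ) (x : ℚ),
    27 ^ n * (ascPochhammer ℚ n).eval (x / 3) * (ascPochhammer ℚ n).eval ((x + 1) / 3) *
      (ascPochhammer ℚ n).eval ((x + 2) / 3) = (ascPochhammer ℚ (3 * n)).eval x := by
  intro n
  induction n with
  | zero => intro x; simp
  | succ n ih =>
    intro x
    have h3 : 3 * (n + 1) = (3 * n + 1) + 1 + 1 := by ring
    have hR : (ascPochhammer ℚ (3 * (n + 1))).eval x =
        (ascPochhammer ℚ (3 * n)).eval x * (x + 3 * n) * (x + 3 * n + 1) * (x + 3 * n + 2) := by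
      rw [h3, ascPochhammer_succ_eval, ascPochhammer_succ_eval, ascPochhammer_succ_eval]
      push_cast
      ring
    rw [hR, ← ih x, ascPochhammer_succ_eval, ascPochhammer_succ_eval, ascPochhammer_succ_eval]
    ring

/-- Closed form for `S(n) = C(2n,n) · ∑_{k=0}^{2n} ((-r)_k / k!) · C(3n-k, 2n-k)`:
`S(n) · (1-r)_n · (n!)² = 27^n · ((1-r)/3)_n · ((2-r)/3)_n · ((3-r)/3)_n`. -/
theorem diagonal_closed_form (r : ℚ) (n : ℕ) :
    ((Nat.choose (2 * n) n : ℚ) *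
        ∑ k ∈ range (2 * n + 1),
          ((ascPochhammer ℚ k).eval (-r) / (Nat.factorial k : ℚ)) *
            (Nat.choose (3 * n - k) (2 * n - k) : ℚ)) *
      (ascPochhammer ℚ n).eval (1 - r) * (Nat.factorial n : ℚ) ^ 2 =
    27 ^ n * (ascPochhammer ℚ n).eval ((1 - r) / 3) *
      (ascPochhammer ℚ n).eval ((2 - r) / 3) *
      (ascPochhammer ℚ n).eval ((3 - r) / 3) := by
  -- inner sum equals pochQ (n+1-r) (2n) via Vandermonde
  have hsum : (∑ k ∈ range (2 * n + 1),
      ((ascPochhammer ℚ k).eval (-r) / (Nat.factorial k : ℚ)) *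
        (Nat.choose (3 * n - k) (2 * n - k) : ℚ)) = pochQ (-r + ((n : ℚ) + 1)) (2 * n) := by
    rw [← vandermondeQ (2 * n) (-r) ((n : ℚ) + 1)]
    refine Finset.sum_congr rfl fun k hk => ?_
    simp only [mem_range] at hk
    have hkle : k ≤ 2 * n := by omega
    have h1 : 3 * n - k = n + (2 * n - k) := by omega
    rw [h1, pochQ_nat_choose n (2 * n - k)]
    rfl
  rw [hsum]
  -- composition: P_n(1-r) * P_{2n}(n+1-r) = P_{3n}(1-r)
  have hcomp := congrArg (Polynomial.eval (1 - r)) (ascPochhammer_mul (S := ℚ) n (2 * n))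
  rw [Polynomial.eval_mul, Polynomial.eval_comp, Polynomial.eval_add, Polynomial.eval_X,
    Polynomial.eval_natCast] at hcomp
  have hn3 : n + 2 * n = 3 * n := by ring
  rw [hn3] at hcomp
  -- choose * (n!)^2 = (2n)!
  have hchoose : (Nat.choose (2 * n) n : ℚ) * (Nat.factorial n : ℚ) ^ 2 =
      (Nat.factorial (2 * n) : ℚ) := by
    have := Nat.choose_mul_factorial_mul_factorial (show n ≤ 2 * n by omega)
    have h2 : 2 * n - n = n := by omega
    rw [h2] at this
    exact_mod_cast by rw [sq]; exact_mod_cast congrArg (Nat.cast : ℕ → ℚ) (by rw [← this]; ring)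
  have hfac : ((Nat.factorial (2 * n) : ℚ)) ≠ 0 := by exact_mod_cast (2 * n).factorial_ne_zero
  have hlhs : ((Nat.choose (2 * n) n : ℚ) * pochQ (-r + ((n : ℚ) + 1)) (2 * n)) *
      (ascPochhammer ℚ n).eval (1 - r) * (Nat.factorial n : ℚ) ^ 2 =
      (ascPochhammer ℚ (3 * n)).eval (1 - r) := by
    unfold pochQ
    have harg : -r + ((n : ℚ) + 1) = 1 - r + (n : ℚ) := by ring
    rw [harg, ← hcomp]
    field_simp
    calc (Nat.choose (2 * n) n : ℚ) * (ascPochhammer ℚ (2 * n)).eval (1 - r + n) *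
          (ascPochhammer ℚ n).eval (1 - r) * (Nat.factorial n : ℚ) ^ 2
        = ((Nat.choose (2 * n) n : ℚ) * (Nat.factorial n : ℚ) ^ 2) *
            ((ascPochhammer ℚ (2 * n)).eval (1 - r + n) * (ascPochhammer ℚ n).eval (1 - r)) := by
          ring
      _ = (Nat.factorial (2 * n) : ℚ) *
            ((ascPochhammer ℚ (2 * n)).eval (1 - r + n) * (ascPochhammer ℚ n).eval (1 - r)) := by
          rw [hchoose]
      _ = _ := by ring
  rw [hlhs]
  have := triplication n (1 - r)
  have e1 : (1 - r) / 3 = (1 - r) / 3 := rfl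
  have e2 : (1 - r + 1) / 3 = (2 - r) / 3 := by ring
  have e3 : (1 - r + 2) / 3 = (3 - r) / 3 := by ring
  rw [e2, e3] at this
  linarith [this]
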